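/- For distinct cutsets T, T' of a graph G and any choices of component-vertex tuples v, v', the monomial primes P_T(v) and P_{T'}(v') do not contain one another; likewise for a fixed cutset T and distinct tuples u ≠ v, P_T(u) and P_T(v) are incomparable. Consequently every P_T(v) is a minimal prime (associated prime) of in_<(J_G). -/

import Mathlib

open MvPolynomial

noncomputable section

/-- The depth of a ring `A` with respect to an ideal `m`: the supremum of lengths of
regular sequences on `A` consisting of elements of `m`. -/
def ringDepth (A : Type*) [CommRing A] (m : Ideal A) : ℕ∞ :=
  sSup {d : ℕ∞ | ∃ l : List A, (∀ r ∈ l, r ∈ m) ∧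
    RingTheory.Sequence.IsRegular A l ∧ d = l.length}

/-- The graded maximal ideal of a polynomial ring, generated by all variables. -/
def mvMaxIdeal (K : Type*) [Field K] (σ : Type*) : Ideal (MvPolynomial σ K) :=
  Ideal.span (Set.range (X : σ → MvPolynomial σ K))

/-- The depth of the quotient of a polynomial ring by an ideal, with respect to the image of
the graded maximal ideal. -/
def quotDepth {K : Type*} [Field K] {σ : Type*} (I : Ideal (MvPolynomial σ K)) : ℕ∞ :=
  ringDepth (MvPolynomial σ K ⧸ I) ((mvMaxIdeal K σ).map (Ideal.Quotient.mk I))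

/-- An ideal `I` of a polynomial ring is Cohen-Macaulay if `depth = Krull dimension`
for the quotient ring. -/
def IsCM {K : Type*} [Field K] {σ : Type*} (I : Ideal (MvPolynomial σ K)) : Prop :=
  (quotDepth I : WithBot ℕ∞) = ringKrullDim (MvPolynomial σ K ⧸ I)

/-- The height of an ideal: the infimum of heights of primes containing it. -/
def idealHeight {A : Type*} [CommRing A] (I : Ideal A) : ℕ∞ :=
  sInf {h : ℕ∞ | ∃ p : PrimeSpectrum A, I ≤ p.asIdeal ∧ Order.height p = h}

/-- An ideal is unmixed if all of its minimal primes have the same height. -/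
def IsUnmixed {A : Type*} [CommRing A] (I : Ideal A) : Prop :=
  ∀ p ∈ I.minimalPrimes, ∀ q ∈ I.minimalPrimes, idealHeight p = idealHeight q

/-- The binomial edge ideal of a graph `G`, in `K[x_i, y_i : i ∈ V(G)]`, where `x_i`
corresponds to `Sum.inl i` and `y_i` to `Sum.inr i`. -/
def beIdeal (K : Type*) [Field K] {V : Type*} (G : SimpleGraph V) :
    Ideal (MvPolynomial (V ⊕ V) K) :=
  Ideal.span {f | ∃ i j, G.Adj i j ∧
    f = X (Sum.inl i) * X (Sum.inr j) - X (Sum.inl j) * X (Sum.inr i)}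

/-- The number of connected components of a graph. -/
def numComp {V : Type*} (G : SimpleGraph V) : ℕ := Nat.card G.ConnectedComponent

/-- `c_G(T)`: the number of connected components of `G \ T`. -/
def compCount {n : ℕ} (G : SimpleGraph (Fin n)) (T : Finset (Fin n)) : ℕ :=
  numComp (G.induce ((↑T : Set (Fin n))ᶜ))

/-- `T` is a cutset of `G`: every `t ∈ T` is a cut vertex of `G \ (T \ {t})`. -/
def IsCutset {n : ℕ} (G : SimpleGraph (Fin n)) (T : Finset (Fin n)) : Prop :=
  ∀ t ∈ T, compCount G (T.erase t) < compCount G T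

/-- `v` is a cut vertex of `G`: its removal increases the number of connected components. -/
def IsCutVertex {V : Type*} (G : SimpleGraph V) (v : V) : Prop :=
  numComp G < numComp (G.induce ({v}ᶜ : Set V))

/-- `v` is a free (simplicial) vertex of `G`: its neighbourhood induces a complete graph. -/
def IsFreeVertex {V : Type*} (G : SimpleGraph V) (v : V) : Prop :=
  ∀ a b, G.Adj v a → G.Adj v b → a ≠ b → G.Adj a b

/-- `G_v`: the graph `G` with all edges added between distinct neighbours of `v`. -/
def nbhdComplete {V : Type*} (G : SimpleGraph V) (v : V) : SimpleGraph V where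
  Adj i j := G.Adj i j ∨ (i ≠ j ∧ G.Adj v i ∧ G.Adj v j)
  symm := by
    constructor
    intro a b h
    rcases h with h | ⟨hne, h1, h2⟩
    · exact Or.inl h.symm
    · exact Or.inr ⟨hne.symm, h2, h1⟩
  loopless := by
    constructor
    intro a h
    rcases h with h | ⟨hne, _, _⟩
    · exact G.irrefl h
    · exact hne rfl

/-- The graph obtained from `G` by attaching a whisker (pendant vertex `none`) at `v`. -/
def addWhisker {V : Type*} (G : SimpleGraph V) (v : V) : SimpleGraph (Option V) where
  Adj a b := (∃ i j, a = some i ∧ b = some j ∧ G.Adj i j) ∨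
    (a = none ∧ b = some v) ∨ (a = some v ∧ b = none)
  symm := by
    constructor
    intro a b h
    rcases h with ⟨i, j, ha, hb, hadj⟩ | ⟨ha, hb⟩ | ⟨ha, hb⟩
    · exact Or.inl ⟨j, i, hb, ha, hadj.symm⟩
    · exact Or.inr (Or.inr ⟨hb, ha⟩)
    · exact Or.inr (Or.inl ⟨hb, ha⟩)
  loopless := by
    constructor
    intro a h
    rcases h with ⟨i, j, ha, hb, hadj⟩ | ⟨ha, hb⟩ | ⟨ha, hb⟩
    · obtain rfl : i = j := Option.some.inj (ha.symm.trans hb)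
      exact G.irrefl hadj
    · exact absurd (ha ▸ hb) (by simp)
    · exact absurd (hb ▸ ha) (by simp)


/-- A (monic) monomial in a polynomial ring. -/
def IsMonomial {K : Type*} [Field K] {σ : Type*} (f : MvPolynomial σ K) : Prop :=
  ∃ d : σ →₀ ℕ, f = monomial d 1

/-- A monomial ideal: an ideal generated by a set of monomials. -/
def IsMonomialIdeal {K : Type*} [Field K] {σ : Type*} (I : Ideal (MvPolynomial σ K)) : Prop :=
  ∃ S : Set (MvPolynomial σ K), (∀ f ∈ S, IsMonomial f) ∧ I = Ideal.span S

/-- The rank of a variable in the order `x₁ > ⋯ > xₙ > y₁ > ⋯ > yₙ`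
(smaller rank = bigger variable). -/
def varRank {n : ℕ} : Fin n ⊕ Fin n → ℕ
  | Sum.inl i => (i : ℕ)
  | Sum.inr i => n + (i : ℕ)

/-- Lexicographic comparison of exponent vectors induced by `x₁ > ⋯ > xₙ > y₁ > ⋯ > yₙ`:
`d` is lex-smaller than `e`. -/
def lexLt {n : ℕ} (d e : (Fin n ⊕ Fin n) →₀ ℕ) : Prop :=
  ∃ s, (∀ t, varRank t < varRank s → d t = e t) ∧ d s < e s

/-- The initial ideal of `I` with respect to the lexicographic order induced by
`x₁ > ⋯ > xₙ > y₁ > ⋯ > yₙ`: generated by leading monomials of nonzero elements of `I`. -/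
def initialIdeal {K : Type*} [Field K] {n : ℕ}
    (I : Ideal (MvPolynomial (Fin n ⊕ Fin n) K)) : Ideal (MvPolynomial (Fin n ⊕ Fin n) K) :=
  Ideal.span {m | ∃ f ∈ I, ∃ d ∈ f.support,
    (∀ e ∈ f.support, e ≠ d → lexLt e d) ∧ m = monomial d 1}

/-- `i` and `j` lie outside `T` and in the same connected component of `G \ T`. -/
def sameComp {n : ℕ} (G : SimpleGraph (Fin n)) (T : Finset (Fin n)) (i j : Fin n) : Prop :=
  ∃ (hi : i ∈ ((↑T : Set (Fin n))ᶜ)) (hj : j ∈ ((↑T : Set (Fin n))ᶜ)),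
    (G.induce ((↑T : Set (Fin n))ᶜ)).Reachable ⟨i, hi⟩ ⟨j, hj⟩

/-- The minimal prime `P_T(G)` of the binomial edge ideal: generated by the variables
indexed by `T` together with the binomial edge ideals of the complete graphs on the
connected components of `G \ T`. -/
def PT (K : Type*) [Field K] {n : ℕ} (G : SimpleGraph (Fin n)) (T : Finset (Fin n)) :
    Ideal (MvPolynomial (Fin n ⊕ Fin n) K) :=
  Ideal.span ({f | ∃ i ∈ T, f = X (Sum.inl i) ∨ f = X (Sum.inr i)} ∪
    {f | ∃ i j, i ≠ j ∧ sameComp G T i j ∧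
      f = X (Sum.inl i) * X (Sum.inr j) - X (Sum.inl j) * X (Sum.inr i)})

/-- `vc` is a choice of one vertex in each connected component of `G \ T` (encoded as a
function assigning to each vertex outside `T` the chosen vertex of its component). -/
def IsCompChoice {n : ℕ} (G : SimpleGraph (Fin n)) (T : Finset (Fin n))
    (vc : Fin n → Fin n) : Prop :=
  (∀ i, i ∉ T → sameComp G T i (vc i)) ∧ (∀ i j, sameComp G T i j → vc i = vc j)

/-- The monomial prime `P_T(v)` associated to a cutset `T` and a choice `vc` of one
vertex in each component of `G \ T`. -/
def PTv (K : Type*) [Field K] {n : ℕ} (G : SimpleGraph (Fin n)) (T : Finset (Fin n))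
    (vc : Fin n → Fin n) : Ideal (MvPolynomial (Fin n ⊕ Fin n) K) :=
  Ideal.span ({f | ∃ i ∈ T, f = X (Sum.inl i) ∨ f = X (Sum.inr i)} ∪
    {f | ∃ i : Fin n, i ∉ T ∧ i < vc i ∧ f = X (Sum.inl i)} ∪
    {f | ∃ j : Fin n, j ∉ T ∧ vc j < j ∧ f = X (Sum.inr j)})

/-- A block of `G`: a maximal connected induced subgraph without cut vertices. -/
def IsBlock {n : ℕ} (G : SimpleGraph (Fin n)) (B : Set (Fin n)) : Prop :=
  (G.induce B).Connected ∧ (∀ w : B, ¬ IsCutVertex (G.induce B) w) ∧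
    ∀ B' : Set (Fin n), B ⊆ B' → (G.induce B').Connected →
      (∀ w : B', ¬ IsCutVertex (G.induce B') w) → B' = B

/-- The block-with-whiskers `B̄`: the induced graph on the block `B` together with one
whisker attached at each cut vertex of `G` lying in `B`. -/
def blockWhisker {n : ℕ} (G : SimpleGraph (Fin n)) (B : Set (Fin n)) :
    SimpleGraph (↥B ⊕ {w : Fin n // w ∈ B ∧ IsCutVertex G w}) where
  Adj a b := (∃ i j, a = Sum.inl i ∧ b = Sum.inl j ∧ G.Adj i j) ∨
    (∃ i c, a = Sum.inl i ∧ b = Sum.inr c ∧ (i : Fin n) = (c : Fin n)) ∨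
    (∃ i c, a = Sum.inr c ∧ b = Sum.inl i ∧ (i : Fin n) = (c : Fin n))
  symm := by
    constructor
    intro a b h
    rcases h with ⟨i, j, ha, hb, hadj⟩ | ⟨i, c, ha, hb, hic⟩ | ⟨i, c, ha, hb, hic⟩
    · exact Or.inl ⟨j, i, hb, ha, hadj.symm⟩
    · exact Or.inr (Or.inr ⟨i, c, hb, ha, hic⟩)
    · exact Or.inr (Or.inl ⟨i, c, hb, ha, hic⟩)
  loopless := by
    constructor
    intro a h
    rcases h with ⟨i, j, ha, hb, hadj⟩ | ⟨i, c, ha, hb, _⟩ | ⟨i, c, ha, hb, _⟩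
    · obtain rfl : i = j := Sum.inl.inj (ha.symm.trans hb)
      exact G.irrefl hadj
    · exact absurd (ha.symm.trans hb) (by simp)
    · exact absurd (ha.symm.trans hb) (by simp)

/-- A graph is accessible if its binomial edge ideal is unmixed and every nonempty
cutset `T` contains a vertex `t` with `T \ {t}` again a cutset. -/
def Accessible (K : Type*) [Field K] {n : ℕ} (G : SimpleGraph (Fin n)) : Prop :=
  IsUnmixed (beIdeal K G) ∧
    ∀ T : Finset (Fin n), IsCutset G T → T.Nonempty → ∃ t ∈ T, IsCutset G (T.erase t)

namespace Stmt6Aux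

variable {K : Type*} [Field K] {σ τ : Type*}

lemma prod_monomial_one {σ' : Type*} (s : Finset σ') (E : σ' → τ →₀ ℕ) :
    (∏ x ∈ s, (monomial (E x) (1 : K))) = monomial (∑ x ∈ s, E x) 1 := by
  classical
  induction s using Finset.cons_induction with
  | empty => simp
  | cons a s ha ih => rw [Finset.prod_cons, Finset.sum_cons, ih, monomial_mul, one_mul]

lemma aeval_mono (ok : σ → Prop) [DecidablePred ok] (E : σ → τ →₀ ℕ)
    (d : σ →₀ ℕ) (c : K) :
    aeval (fun s => if ok s then monomial (E s) (1 : K) else 0) (monomial d c) =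
      if ∀ s ∈ d.support, ok s then monomial (d.sum fun s k => k • E s) c else 0 := by
  classical
  rw [aeval_monomial]
  by_cases h : ∀ s ∈ d.support, ok s
  · rw [if_pos h]
    have h2 : (d.prod fun s k => (if ok s then monomial (E s) (1:K) else 0) ^ k)
        = monomial (d.sum fun s k => k • E s) 1 := by
      rw [Finsupp.prod, Finsupp.sum]
      calc ∏ s ∈ d.support, (if ok s then monomial (E s) (1:K) else 0) ^ d s
          = ∏ s ∈ d.support, monomial (d s • E s) (1:K) :=
            Finset.prod_congr rfl (fun s hs => by
              rw [if_pos (h s hs), monomial_pow, one_pow])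
        _ = monomial (∑ s ∈ d.support, d s • E s) 1 := prod_monomial_one _ _
    rw [h2, algebraMap_eq, C_mul_monomial, mul_one]
  · rw [if_neg h]
    push_neg at h
    obtain ⟨s, hs, hns⟩ := h
    have hz : (if ok s then monomial (E s) (1:K) else 0) ^ d s = 0 := by
      rw [if_neg hns, zero_pow]
      simpa using (Finsupp.mem_support_iff.mp hs)
    rw [Finsupp.prod, Finset.prod_eq_zero hs hz, mul_zero]

lemma exists_partner (ok : σ → Prop) [DecidablePred ok] (E : σ → τ →₀ ℕ)
    (f : MvPolynomial σ K)
    (hf : aeval (fun s => if ok s then monomial (E s) (1 : K) else 0) f = 0)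
    (d0 : σ →₀ ℕ) (hd0 : d0 ∈ f.support) (hok : ∀ s ∈ d0.support, ok s) :
    ∃ d ∈ f.support, d ≠ d0 ∧ (∀ s ∈ d.support, ok s) ∧
      (d.sum fun s k => k • E s) = (d0.sum fun s k => k • E s) := by
  classical
  by_contra hcon
  push_neg at hcon
  have hcoeff : coeff (d0.sum fun s k => k • E s)
      (aeval (fun s => if ok s then monomial (E s) (1 : K) else 0) f) = coeff d0 f := by
    conv_lhs => rw [f.as_sum, map_sum]
    rw [coeff_sum]
    rw [Finset.sum_eq_single d0]
    · rw [aeval_mono ok E, if_pos hok, coeff_monomial, if_pos rfl]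
    · intro d hd hne
      rw [aeval_mono ok E]
      by_cases hokd : ∀ s ∈ d.support, ok s
      · rw [if_pos hokd, coeff_monomial, if_neg]
        intro heq
        exact (hcon d hd hne hokd) heq
      · rw [if_neg hokd, coeff_zero]
    · intro h; exact absurd hd0 h
  rw [hf, coeff_zero] at hcoeff
  exact (MvPolynomial.mem_support_iff.mp hd0) hcoeff.symm


lemma sum_smul_single_eq {σ : Type*} (d : σ →₀ ℕ) :
    (d.sum fun s k => k • Finsupp.single s (1 : ℕ)) = d := by
  have h : (fun (s : σ) (k : ℕ) => k • Finsupp.single s (1:ℕ)) = fun s k => Finsupp.single s k := by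
    funext s k
    rw [Finsupp.smul_single, smul_eq_mul, mul_one]
  rw [h, Finsupp.sum_single]

lemma span_X_eq_ker (S : Set σ) [DecidablePred (· ∈ S)] :
    Ideal.span (X '' S : Set (MvPolynomial σ K)) =
      RingHom.ker ((aeval (R := K)
        (fun s => if s ∉ S then monomial (Finsupp.single s 1) (1:K) else 0)) :
          MvPolynomial σ K →ₐ[K] MvPolynomial σ K) := by
  classical
  apply le_antisymm
  · rw [Ideal.span_le]
    rintro f ⟨s, hs, rfl⟩
    simp only [SetLike.mem_coe, RingHom.mem_ker]
    rw [show (X s : MvPolynomial σ K) = monomial (Finsupp.single s 1) 1 by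
      rw [← X_pow_eq_monomial, pow_one]]
    rw [aeval_mono (fun s => s ∉ S) _ _ _]
    rw [if_neg]
    push_neg
    refine ⟨s, ?_, hs⟩
    rw [Finsupp.mem_support_iff, Finsupp.single_apply, if_pos rfl]
    exact one_ne_zero
  · intro f hf
    rw [RingHom.mem_ker] at hf
    rw [mem_ideal_span_X_image]
    intro d0 hd0
    by_contra hno
    push_neg at hno
    have hok : ∀ s ∈ d0.support, ¬ s ∈ S := by
      intro s hs hsS
      exact (Finsupp.mem_support_iff.mp hs) (hno s hsS)
    obtain ⟨d, hd, hne, -, hsum⟩ := exists_partner (fun s => ¬ s ∈ S) _ f hf d0 hd0 hok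
    rw [sum_smul_single_eq, sum_smul_single_eq] at hsum
    exact hne hsum

lemma isPrime_span_X (S : Set σ) :
    (Ideal.span (X '' S : Set (MvPolynomial σ K))).IsPrime := by
  classical
  rw [span_X_eq_ker S]
  exact RingHom.ker_isPrime _

lemma X_mem_span_X_iff (S : Set σ) (s : σ) :
    (X s : MvPolynomial σ K) ∈ Ideal.span (X '' S) ↔ s ∈ S := by
  classical
  constructor
  · intro h
    rw [mem_ideal_span_X_image] at h
    obtain ⟨i, hi, hne⟩ := h (Finsupp.single s 1) (by
      rw [support_X]; exact Finset.mem_singleton_self _)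
    by_cases hsi : s = i
    · exact hsi ▸ hi
    · rw [Finsupp.single_apply, if_neg hsi] at hne
      exact absurd rfl hne
  · intro h
    exact Ideal.subset_span ⟨s, h, rfl⟩

end Stmt6Aux

namespace Stmt6Aux

open Sum

variable {K : Type*} [Field K] {n : ℕ}

/-- The index set of variables generating `PTv`. -/
def Svars (T : Finset (Fin n)) (vc : Fin n → Fin n) : Set (Fin n ⊕ Fin n) :=
  {s | Sum.elim (fun i => i ∈ T ∨ (i ∉ T ∧ i < vc i)) (fun i => i ∈ T ∨ (i ∉ T ∧ vc i < i)) s}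

lemma inl_mem_Svars {T : Finset (Fin n)} {vc : Fin n → Fin n} {i : Fin n} :
    Sum.inl i ∈ Svars T vc ↔ i ∈ T ∨ (i ∉ T ∧ i < vc i) := Iff.rfl

lemma inr_mem_Svars {T : Finset (Fin n)} {vc : Fin n → Fin n} {i : Fin n} :
    Sum.inr i ∈ Svars T vc ↔ i ∈ T ∨ (i ∉ T ∧ vc i < i) := Iff.rfl

lemma PTv_eq (G : SimpleGraph (Fin n)) (T : Finset (Fin n)) (vc : Fin n → Fin n) :
    PTv K G T vc = Ideal.span (X '' Svars T vc) := by
  have hset : ({f | ∃ i ∈ T, f = X (Sum.inl i) ∨ f = X (Sum.inr i)} ∪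
      {f | ∃ i : Fin n, i ∉ T ∧ i < vc i ∧ f = X (Sum.inl i)} ∪
      {f | ∃ j : Fin n, j ∉ T ∧ vc j < j ∧ f = X (Sum.inr j)} :
        Set (MvPolynomial (Fin n ⊕ Fin n) K)) = X '' Svars T vc := by
    ext f
    simp only [Set.mem_union, Set.mem_setOf_eq, Set.mem_image]
    constructor
    · rintro ((⟨i, hi, (rfl | rfl)⟩ | ⟨i, hi1, hi2, rfl⟩) | ⟨j, hj1, hj2, rfl⟩)
      · exact ⟨Sum.inl i, Or.inl hi, rfl⟩
      · exact ⟨Sum.inr i, Or.inl hi, rfl⟩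
      · exact ⟨Sum.inl i, Or.inr ⟨hi1, hi2⟩, rfl⟩
      · exact ⟨Sum.inr j, Or.inr ⟨hj1, hj2⟩, rfl⟩
    · rintro ⟨s, hs, rfl⟩
      rcases s with i | i
      · rcases hs with hi | ⟨hi1, hi2⟩
        · exact Or.inl (Or.inl ⟨i, hi, Or.inl rfl⟩)
        · exact Or.inl (Or.inr ⟨i, hi1, hi2, rfl⟩)
      · rcases hs with hi | ⟨hi1, hi2⟩
        · exact Or.inl (Or.inl ⟨i, hi, Or.inr rfl⟩)
        · exact Or.inr ⟨i, hi1, hi2, rfl⟩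
  unfold PTv
  rw [hset]

lemma PTv_isPrime (G : SimpleGraph (Fin n)) (T : Finset (Fin n)) (vc : Fin n → Fin n) :
    (PTv K G T vc).IsPrime := by
  rw [PTv_eq]
  exact isPrime_span_X _

lemma X_mem_PTv_iff (G : SimpleGraph (Fin n)) (T : Finset (Fin n)) (vc : Fin n → Fin n)
    (s : Fin n ⊕ Fin n) : (X s : MvPolynomial (Fin n ⊕ Fin n) K) ∈ PTv K G T vc ↔
      s ∈ Svars T vc := by
  rw [PTv_eq, X_mem_span_X_iff]

lemma not_le_of_var {G G' : SimpleGraph (Fin n)} {T T' : Finset (Fin n)}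
    {vc vc' : Fin n → Fin n} {s : Fin n ⊕ Fin n}
    (h1 : s ∈ Svars T vc) (h2 : s ∉ Svars T' vc') :
    ¬ PTv K G T vc ≤ PTv K G' T' vc' := fun hle =>
  h2 ((X_mem_PTv_iff G' T' vc' s).mp (hle ((X_mem_PTv_iff G T vc s).mpr h1)))

/-! lex order facts -/

lemma varRank_lt_of_inl {i : Fin n} {j : Fin n} : varRank (inl i) < varRank (inr j) := by
  simp only [varRank]
  omega

lemma varRank_inj : Function.Injective (varRank (n := n)) := by
  rintro (i | i) (j | j) h <;> simp only [varRank] at h <;>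
    first
      | (exact congrArg _ (Fin.ext h))
      | (exact congrArg _ (Fin.ext (by omega)))
      | (exact absurd h (by omega))

lemma lexLt_asymm {d e : (Fin n ⊕ Fin n) →₀ ℕ} (h1 : lexLt d e) (h2 : lexLt e d) : False := by
  obtain ⟨s1, hs1, hlt1⟩ := h1
  obtain ⟨s2, hs2, hlt2⟩ := h2
  rcases lt_trichotomy (varRank s1) (varRank s2) with h | h | h
  · rw [hs2 s1 h] at hlt1; omega
  · rw [varRank_inj h] at hlt1; omega
  · rw [hs1 s2 h] at hlt2; omega

lemma exists_min_diff {d e : (Fin n ⊕ Fin n) →₀ ℕ} (hne : d ≠ e) :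
    ∃ s, (∀ t, varRank t < varRank s → d t = e t) ∧ d s ≠ e s := by
  classical
  have hF : ((d.support ∪ e.support).filter (fun s => d s ≠ e s)).Nonempty := by
    obtain ⟨s, hs⟩ := Finsupp.ne_iff.mp hne
    refine ⟨s, Finset.mem_filter.mpr ⟨?_, hs⟩⟩
    rcases Decidable.eq_or_ne (d s) 0 with h0 | h0
    · exact Finset.mem_union_right _ (Finsupp.mem_support_iff.mpr (by omega))
    · exact Finset.mem_union_left _ (Finsupp.mem_support_iff.mpr h0)
  obtain ⟨s, hsmem, hsmin⟩ := Finset.exists_min_image _ varRank hF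
  refine ⟨s, ?_, (Finset.mem_filter.mp hsmem).2⟩
  intro t ht
  by_contra hcon
  have htF : t ∈ (d.support ∪ e.support).filter (fun s => d s ≠ e s) := by
    refine Finset.mem_filter.mpr ⟨?_, hcon⟩
    rcases Decidable.eq_or_ne (d t) 0 with h0 | h0
    · exact Finset.mem_union_right _ (Finsupp.mem_support_iff.mpr (by omega))
    · exact Finset.mem_union_left _ (Finsupp.mem_support_iff.mpr h0)
  exact absurd (hsmin t htF) (by omega)

/-! sameComp and IsCompChoice facts -/

lemma sameComp_refl (G : SimpleGraph (Fin n)) (T : Finset (Fin n)) {i : Fin n} (hi : i ∉ T) :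
    sameComp G T i i := by
  have h : i ∈ ((↑T : Set (Fin n))ᶜ) := by simpa using hi
  exact ⟨h, h, SimpleGraph.Reachable.refl _⟩

lemma sameComp_symm {G : SimpleGraph (Fin n)} {T : Finset (Fin n)} {i j : Fin n}
    (h : sameComp G T i j) : sameComp G T j i := by
  obtain ⟨hi, hj, hr⟩ := h
  exact ⟨hj, hi, hr.symm⟩

lemma sameComp_trans {G : SimpleGraph (Fin n)} {T : Finset (Fin n)} {i j k : Fin n}
    (h1 : sameComp G T i j) (h2 : sameComp G T j k) : sameComp G T i k := by
  obtain ⟨hi, hj, hr1⟩ := h1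
  obtain ⟨hj', hk, hr2⟩ := h2
  exact ⟨hi, hk, hr1.trans hr2⟩

lemma sameComp_notMem_left {G : SimpleGraph (Fin n)} {T : Finset (Fin n)} {i j : Fin n}
    (h : sameComp G T i j) : i ∉ T := by
  obtain ⟨hi, -, -⟩ := h
  simpa using hi

lemma sameComp_notMem_right {G : SimpleGraph (Fin n)} {T : Finset (Fin n)} {i j : Fin n}
    (h : sameComp G T i j) : j ∉ T := sameComp_notMem_left (sameComp_symm h)

lemma adj_sameComp {G : SimpleGraph (Fin n)} {T : Finset (Fin n)} {i j : Fin n}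
    (hadj : G.Adj i j) (hi : i ∉ T) (hj : j ∉ T) : sameComp G T i j := by
  have hi' : i ∈ ((↑T : Set (Fin n))ᶜ) := by simpa using hi
  have hj' : j ∈ ((↑T : Set (Fin n))ᶜ) := by simpa using hj
  refine ⟨hi', hj', SimpleGraph.Adj.reachable ?_⟩
  exact hadj

lemma choice_sameComp {G : SimpleGraph (Fin n)} {T : Finset (Fin n)} {vc : Fin n → Fin n}
    (hc : IsCompChoice G T vc) {i : Fin n} (hi : i ∉ T) : sameComp G T i (vc i) := hc.1 i hi

lemma choice_notMem {G : SimpleGraph (Fin n)} {T : Finset (Fin n)} {vc : Fin n → Fin n}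
    (hc : IsCompChoice G T vc) {i : Fin n} (hi : i ∉ T) : vc i ∉ T :=
  sameComp_notMem_right (hc.1 i hi)

lemma choice_eq_of_sameComp {G : SimpleGraph (Fin n)} {T : Finset (Fin n)} {vc : Fin n → Fin n}
    (hc : IsCompChoice G T vc) {i j : Fin n} (h : sameComp G T i j) : vc i = vc j := hc.2 i j h

lemma choice_idem {G : SimpleGraph (Fin n)} {T : Finset (Fin n)} {vc : Fin n → Fin n}
    (hc : IsCompChoice G T vc) {i : Fin n} (hi : i ∉ T) : vc (vc i) = vc i :=
  (hc.2 i (vc i) (hc.1 i hi)).symm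

lemma X_eq_monomial (s : Fin n ⊕ Fin n) :
    (X s : MvPolynomial (Fin n ⊕ Fin n) K) = monomial (Finsupp.single s 1) 1 := by
  rw [← X_pow_eq_monomial, pow_one]

lemma edge_mem_beIdeal {G : SimpleGraph (Fin n)} {i j : Fin n} (h : G.Adj i j) :
    (X (Sum.inl i) * X (Sum.inr j) - X (Sum.inl j) * X (Sum.inr i) :
      MvPolynomial (Fin n ⊕ Fin n) K) ∈ beIdeal K G :=
  Ideal.subset_span ⟨i, j, h, rfl⟩

lemma walk_mem_beIdeal (G : SimpleGraph (Fin n)) (χ : Fin n → Fin n ⊕ Fin n)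
    (hχ : ∀ v, χ v = Sum.inl v ∨ χ v = Sum.inr v) {p q : Fin n} (w : G.Walk p q) :
    ∃ u : (Fin n ⊕ Fin n) →₀ ℕ,
      (∀ s ∈ u.support, ∃ v ∈ w.support, s = χ v) ∧
      monomial u (1:K) * (X (Sum.inl p) * X (Sum.inr q) - X (Sum.inl q) * X (Sum.inr p))
        ∈ beIdeal K G := by
  induction w with
  | nil =>
    refine ⟨0, by simp, ?_⟩
    rw [sub_self, mul_zero]
    exact (beIdeal K G).zero_mem
  | @cons a b c hadj w' ih =>
    obtain ⟨u', hu', hmem'⟩ := ih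
    refine ⟨u' + Finsupp.single (χ b) 1, ?_, ?_⟩
    · intro s hs
      rcases Finset.mem_union.mp (Finsupp.support_add hs) with hs | hs
      · obtain ⟨v, hv, rfl⟩ := hu' s hs
        exact ⟨v, by rw [SimpleGraph.Walk.support_cons]; exact List.mem_cons_of_mem _ hv, rfl⟩
      · have : s = χ b := by
          have := Finsupp.support_single_subset hs
          simpa using this
        refine ⟨b, ?_, this⟩
        rw [SimpleGraph.Walk.support_cons]
        exact List.mem_cons_of_mem _ w'.start_mem_support
    · have hmono : (monomial (u' + Finsupp.single (χ b) 1) (1:K) :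
          MvPolynomial (Fin n ⊕ Fin n) K) = monomial u' 1 * X (χ b) := by
        rw [X_eq_monomial, monomial_mul, mul_one]
      rw [hmono]
      rcases hχ b with hb | hb <;> rw [hb]
      · have heq : (monomial u' (1:K) * X (Sum.inl b) *
            (X (Sum.inl a) * X (Sum.inr c) - X (Sum.inl c) * X (Sum.inr a)) :
              MvPolynomial (Fin n ⊕ Fin n) K) =
            X (Sum.inl a) * (monomial u' 1 *
              (X (Sum.inl b) * X (Sum.inr c) - X (Sum.inl c) * X (Sum.inr b))) +
            monomial u' 1 * X (Sum.inl c) *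
              (X (Sum.inl a) * X (Sum.inr b) - X (Sum.inl b) * X (Sum.inr a)) := by
          ring
        rw [heq]
        exact Ideal.add_mem _ (Ideal.mul_mem_left _ _ hmem')
          (Ideal.mul_mem_left _ _ (edge_mem_beIdeal hadj))
      · have heq : (monomial u' (1:K) * X (Sum.inr b) *
            (X (Sum.inl a) * X (Sum.inr c) - X (Sum.inl c) * X (Sum.inr a)) :
              MvPolynomial (Fin n ⊕ Fin n) K) =
            X (Sum.inr a) * (monomial u' 1 *
              (X (Sum.inl b) * X (Sum.inr c) - X (Sum.inl c) * X (Sum.inr b))) +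
            monomial u' 1 * X (Sum.inr c) *
              (X (Sum.inl a) * X (Sum.inr b) - X (Sum.inl b) * X (Sum.inr a)) := by
          ring
        rw [heq]
        exact Ideal.add_mem _ (Ideal.mul_mem_left _ _ hmem')
          (Ideal.mul_mem_left _ _ (edge_mem_beIdeal hadj))

lemma lead_mem_initial {G : SimpleGraph (Fin n)} {p q : Fin n} (hpq : p < q)
    (u : (Fin n ⊕ Fin n) →₀ ℕ)
    (hu : monomial u (1:K) * (X (Sum.inl p) * X (Sum.inr q) - X (Sum.inl q) * X (Sum.inr p))
      ∈ beIdeal K G) :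
    monomial (u + Finsupp.single (Sum.inl p) 1 + Finsupp.single (Sum.inr q) 1) (1:K)
      ∈ initialIdeal (beIdeal K G) := by
  classical
  have hpqv : (p : ℕ) < (q : ℕ) := hpq
  set d1 := u + Finsupp.single (Sum.inl p) 1 + Finsupp.single (Sum.inr q) 1 with hd1
  set d2 := u + Finsupp.single (Sum.inl q) 1 + Finsupp.single (Sum.inr p) 1 with hd2
  have key : ∀ a b : Fin n ⊕ Fin n, monomial u (1:K) * (X a * X b) =
      monomial (u + Finsupp.single a 1 + Finsupp.single b 1) 1 := by
    intro a b
    rw [X_eq_monomial, X_eq_monomial, ← mul_assoc, monomial_mul, monomial_mul, mul_one, mul_one]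
  have hf : monomial u (1:K) *
      (X (Sum.inl p) * X (Sum.inr q) - X (Sum.inl q) * X (Sum.inr p)) =
      monomial d1 1 - monomial d2 1 := by
    rw [mul_sub, key, key]
  have h1 : d1 (Sum.inl p) = u (Sum.inl p) + 1 := by
    simp [hd1, Finsupp.single_apply]
  have h2 : d2 (Sum.inl p) = u (Sum.inl p) := by
    have : q ≠ p := hpq.ne'
    simp [hd2, Finsupp.single_apply, this]
  have hdne : d2 ≠ d1 := by
    intro h
    rw [Finsupp.ext_iff] at h
    have := h (Sum.inl p)
    omega
  have hmemf : monomial d1 (1:K) - monomial d2 1 ∈ beIdeal K G := by rw [← hf]; exact hu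
  have hcoeff1 : coeff d1 (monomial d1 (1:K) - monomial d2 1) = 1 := by
    rw [coeff_sub, coeff_monomial, coeff_monomial, if_pos rfl, if_neg hdne, sub_zero]
  have hd1mem : d1 ∈ (monomial d1 (1:K) - monomial d2 1).support := by
    rw [MvPolynomial.mem_support_iff, hcoeff1]
    exact one_ne_zero
  have hsupp : (monomial d1 (1:K) - monomial d2 1).support ⊆ {d1, d2} := by
    refine (MvPolynomial.support_sub _ _ _).trans ?_
    rw [support_monomial, support_monomial, if_neg one_ne_zero, if_neg one_ne_zero]
    intro e he
    rcases Finset.mem_union.mp he with he | he <;> simp_all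
  have hlex : lexLt d2 d1 := by
    refine ⟨Sum.inl p, ?_, by omega⟩
    intro t ht
    rcases t with k | k
    · have hk : (k : ℕ) < (p : ℕ) := by simpa [varRank] using ht
      have hkp : p ≠ k := fun h => by omega
      have hkq : q ≠ k := fun h => by omega
      simp [hd1, hd2, Finsupp.single_apply, hkp, hkq]
    · exfalso
      have : n + (k : ℕ) < (p : ℕ) := by simpa [varRank] using ht
      omega
  apply Ideal.subset_span
  refine ⟨monomial d1 1 - monomial d2 1, hmemf, d1, hd1mem, ?_, rfl⟩
  intro e he hne
  have : e = d2 := by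
    rcases Finset.mem_insert.mp (hsupp he) with h | h
    · exact absurd h hne
    · simpa using h
  rw [this]
  exact hlex

lemma mono_prime_var {Q : Ideal (MvPolynomial (Fin n ⊕ Fin n) K)} (hQ : Q.IsPrime)
    {d : (Fin n ⊕ Fin n) →₀ ℕ} (hd : monomial d (1:K) ∈ Q) :
    ∃ s ∈ d.support, X s ∈ Q := by
  classical
  haveI := hQ
  rw [← MvPolynomial.prod_X_pow_eq_monomial] at hd
  obtain ⟨s, hs, hX⟩ := (Ideal.IsPrime.prod_mem_iff).mp hd
  exact ⟨s, hs, (hQ.pow_mem_iff_mem _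
    (Nat.pos_of_ne_zero (Finsupp.mem_support_iff.mp hs))).mp hX⟩

def inclHom (G : SimpleGraph (Fin n)) (s : Set (Fin n)) : G.induce s →g G :=
  ⟨Subtype.val, fun {a b} h => h⟩

lemma sameComp_exists_walk {G : SimpleGraph (Fin n)} {T : Finset (Fin n)} {i j : Fin n}
    (h : sameComp G T i j) : ∃ w : G.Walk i j, ∀ v ∈ w.support, v ∉ T := by
  obtain ⟨hi, hj, hr⟩ := h
  obtain ⟨w0⟩ := hr
  refine ⟨w0.map (inclHom G _), ?_⟩
  intro v hv
  replace hv : v ∈ (w0.map (inclHom G _)).support := hv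
  rw [SimpleGraph.Walk.support_map] at hv
  obtain ⟨v', hv', rfl⟩ := List.mem_map.mp hv
  have h2 := v'.2
  simp only [Set.mem_compl_iff, Finset.mem_coe] at h2
  exact h2

lemma extract_var (G : SimpleGraph (Fin n)) (T : Finset (Fin n)) (vc : Fin n → Fin n)
    {Q : Ideal (MvPolynomial (Fin n ⊕ Fin n) K)} (hQ : Q.IsPrime)
    (hQl : initialIdeal (beIdeal K G) ≤ Q) (hQP : Q ≤ PTv K G T vc)
    {p q : Fin n} (hpq : p < q) (χ : Fin n → Fin n ⊕ Fin n)
    (hχ : ∀ v, χ v = Sum.inl v ∨ χ v = Sum.inr v) (w : G.Walk p q) :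
    ∃ s, (X s : MvPolynomial (Fin n ⊕ Fin n) K) ∈ Q ∧ s ∈ Svars T vc ∧
      (s = Sum.inl p ∨ s = Sum.inr q ∨ ∃ v ∈ w.support, s = χ v) := by
  obtain ⟨u, hu, hmem⟩ := walk_mem_beIdeal (K := K) G χ hχ w
  have hlead := lead_mem_initial hpq u hmem
  have hQmem := hQl hlead
  obtain ⟨s, hs, hX⟩ := mono_prime_var hQ hQmem
  refine ⟨s, hX, (X_mem_PTv_iff G T vc s).mp (hQP hX), ?_⟩
  rcases Finset.mem_union.mp (Finsupp.support_add hs) with hs' | hs'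
  · rcases Finset.mem_union.mp (Finsupp.support_add hs') with hs'' | hs''
    · exact Or.inr (Or.inr (hu s hs''))
    · left; simpa using Finsupp.support_single_subset hs''
  · right; left; simpa using Finsupp.support_single_subset hs'

/-! The specialization argument: `in(J_G) ⊆ P_T(v)`. -/

def psi0 (vc : Fin n → Fin n) : Fin n ⊕ Fin n → (Fin n ⊕ (Fin n ⊕ Fin n)) →₀ ℕ
  | Sum.inl i => Finsupp.single (Sum.inl i) 1 + Finsupp.single (Sum.inr (Sum.inl (vc i))) 1
  | Sum.inr i => Finsupp.single (Sum.inl i) 1 + Finsupp.single (Sum.inr (Sum.inr (vc i))) 1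

def okT (T : Finset (Fin n)) : Fin n ⊕ Fin n → Prop :=
  Sum.elim (fun i => i ∉ T) (fun i => i ∉ T)

instance okT_dec (T : Finset (Fin n)) : DecidablePred (okT T) := fun s => by
  cases s with
  | inl i => exact inferInstanceAs (Decidable (i ∉ T))
  | inr i => exact inferInstanceAs (Decidable (i ∉ T))

lemma okT_inl {T : Finset (Fin n)} {i : Fin n} : okT T (Sum.inl i) ↔ i ∉ T := Iff.rfl
lemma okT_inr {T : Finset (Fin n)} {i : Fin n} : okT T (Sum.inr i) ↔ i ∉ T := Iff.rfl

lemma psi_lambda (vc : Fin n → Fin n) (d : (Fin n ⊕ Fin n) →₀ ℕ) (i : Fin n) :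
    (d.sum fun s k => k • psi0 vc s) (Sum.inl i) = d (Sum.inl i) + d (Sum.inr i) := by
  classical
  rw [Finsupp.sum_apply]
  have h1 : (d.sum fun s k => (k • psi0 vc s) (Sum.inl i)) =
      ∑ s ∈ d.support, d s * psi0 vc s (Sum.inl i) := by
    rw [Finsupp.sum]
    exact Finset.sum_congr rfl fun s _ => by rw [Finsupp.smul_apply, smul_eq_mul]
  rw [h1, Finset.sum_subset (Finset.subset_univ d.support) (by
    intro s _ hs
    rw [Finsupp.notMem_support_iff.mp hs, zero_mul])]
  rw [Fintype.sum_sum_type]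
  have e1 : ∀ j : Fin n, psi0 vc (Sum.inl j) (Sum.inl i) = if j = i then 1 else 0 := by
    intro j; simp [psi0, Finsupp.single_apply]
  have e2 : ∀ j : Fin n, psi0 vc (Sum.inr j) (Sum.inl i) = if j = i then 1 else 0 := by
    intro j; simp [psi0, Finsupp.single_apply]
  simp only [e1, e2, mul_ite, mul_one, mul_zero]
  rw [Finset.sum_ite_eq' Finset.univ i (fun j => d (Sum.inl j)),
      Finset.sum_ite_eq' Finset.univ i (fun j => d (Sum.inr j))]
  simp

lemma psi_s (vc : Fin n → Fin n) (d : (Fin n ⊕ Fin n) →₀ ℕ) (a : Fin n) :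
    (d.sum fun s k => k • psi0 vc s) (Sum.inr (Sum.inl a)) =
      ∑ j ∈ Finset.univ.filter (fun j => vc j = a), d (Sum.inl j) := by
  classical
  rw [Finsupp.sum_apply]
  have h1 : (d.sum fun s k => (k • psi0 vc s) (Sum.inr (Sum.inl a))) =
      ∑ s ∈ d.support, d s * psi0 vc s (Sum.inr (Sum.inl a)) := by
    rw [Finsupp.sum]
    exact Finset.sum_congr rfl fun s _ => by rw [Finsupp.smul_apply, smul_eq_mul]
  rw [h1, Finset.sum_subset (Finset.subset_univ d.support) (by
    intro s _ hs
    rw [Finsupp.notMem_support_iff.mp hs, zero_mul])]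
  rw [Fintype.sum_sum_type]
  have e1 : ∀ j : Fin n, psi0 vc (Sum.inl j) (Sum.inr (Sum.inl a)) =
      if vc j = a then 1 else 0 := by
    intro j; simp [psi0, Finsupp.single_apply]
  have e2 : ∀ j : Fin n, psi0 vc (Sum.inr j) (Sum.inr (Sum.inl a)) = 0 := by
    intro j; simp [psi0, Finsupp.single_apply]
  simp only [e1, e2, mul_ite, mul_one, mul_zero]
  simp [Finset.sum_filter]

lemma aeval_psi_beIdeal (G : SimpleGraph (Fin n)) (T : Finset (Fin n)) (vc : Fin n → Fin n)
    (hc : IsCompChoice G T vc) :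
    ∀ f ∈ beIdeal K G,
      aeval (fun s => if okT T s then monomial (psi0 vc s) (1:K) else 0) f = 0 := by
  classical
  intro f hf
  have hspan : beIdeal K G ≤ RingHom.ker ((aeval
      (fun s => if okT T s then monomial (psi0 vc s) (1:K) else 0)) :
        MvPolynomial (Fin n ⊕ Fin n) K →ₐ[K] MvPolynomial (Fin n ⊕ (Fin n ⊕ Fin n)) K) := by
    rw [beIdeal, Ideal.span_le]
    rintro g ⟨i, j, hadj, rfl⟩
    rw [SetLike.mem_coe, RingHom.mem_ker, map_sub, map_mul, map_mul,
      aeval_X, aeval_X, aeval_X, aeval_X]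
    by_cases hi : i ∈ T
    · rw [if_neg (show ¬ okT T (Sum.inl i) from fun h => h hi),
        if_neg (show ¬ okT T (Sum.inr i) from fun h => h hi)]
      simp
    · by_cases hj : j ∈ T
      · rw [if_neg (show ¬ okT T (Sum.inr j) from fun h => h hj),
          if_neg (show ¬ okT T (Sum.inl j) from fun h => h hj)]
        simp
      · have hvc : vc i = vc j := choice_eq_of_sameComp hc (adj_sameComp hadj hi hj)
        rw [if_pos (okT_inl.mpr hi), if_pos (okT_inr.mpr hj),
          if_pos (okT_inl.mpr hj), if_pos (okT_inr.mpr hi)]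
        rw [monomial_mul, monomial_mul, one_mul]
        rw [sub_eq_zero]
        congr 1
        simp only [psi0, hvc]
        abel
  exact hspan hf

lemma initial_le_PTv (G : SimpleGraph (Fin n)) (T : Finset (Fin n)) (vc : Fin n → Fin n)
    (hc : IsCompChoice G T vc) :
    initialIdeal (beIdeal K G) ≤ PTv K G T vc := by
  classical
  rw [initialIdeal, Ideal.span_le]
  rintro m ⟨f, hf, d0, hd0, hmax, rfl⟩
  rw [SetLike.mem_coe, PTv_eq, mem_ideal_span_X_image]
  intro d hd
  rw [support_monomial, if_neg one_ne_zero, Finset.mem_singleton] at hd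
  rw [hd]
  by_contra hno
  push_neg at hno
  have havoid : ∀ s, d0 s ≠ 0 → s ∉ Svars T vc := fun s h1 h2 => h1 (hno s h2)
  have hokd0 : ∀ s ∈ d0.support, okT T s := by
    intro s hs
    have hx := havoid s (Finsupp.mem_support_iff.mp hs)
    rcases s with i | i
    · exact fun hiT => hx (Or.inl hiT)
    · exact fun hiT => hx (Or.inl hiT)
  have hfz := aeval_psi_beIdeal G T vc hc f hf
  obtain ⟨d2, hd2mem, hd2ne, hd2ok, hd2sum⟩ :=
    exists_partner (okT T) (psi0 vc) f hfz d0 hd0 hokd0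
  have hlam : ∀ i : Fin n, d2 (Sum.inl i) + d2 (Sum.inr i) =
      d0 (Sum.inl i) + d0 (Sum.inr i) := by
    intro i
    have h1 := psi_lambda vc d2 i
    have h2 := psi_lambda vc d0 i
    rw [hd2sum, h2] at h1
    omega
  have hsft : ∀ a : Fin n, (∑ j ∈ Finset.univ.filter (fun j => vc j = a), d2 (Sum.inl j)) =
      ∑ j ∈ Finset.univ.filter (fun j => vc j = a), d0 (Sum.inl j) := by
    intro a
    have h1 := psi_s vc d2 a
    have h2 := psi_s vc d0 a
    rw [hd2sum, h2] at h1
    exact h1.symm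
  obtain ⟨s, hsmin, hsne⟩ := exists_min_diff (show d0 ≠ d2 from fun h => hd2ne h.symm)
  rcases s with i | i
  case inr =>
    have hinleq : ∀ j : Fin n, d0 (Sum.inl j) = d2 (Sum.inl j) := by
      intro j
      refine hsmin (Sum.inl j) ?_
      simp only [varRank]
      omega
    have h := hlam i
    rw [← hinleq i] at h
    exact hsne (by omega)
  case inl =>
    rcases lt_trichotomy (d0 (Sum.inl i)) (d2 (Sum.inl i)) with hlt | heq | hgt
    · exact lexLt_asymm ⟨Sum.inl i, hsmin, hlt⟩ (hmax d2 hd2mem hd2ne)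
    · exact hsne heq
    · have hd0pos : d0 (Sum.inl i) ≠ 0 := by omega
      have hiS := havoid _ hd0pos
      rw [inl_mem_Svars] at hiS
      have hiT : i ∉ T := fun h => hiS (Or.inl h)
      have hvle : ¬ i < vc i := fun h => hiS (Or.inr ⟨hiT, h⟩)
      have hvlen : (vc i : ℕ) ≤ (i : ℕ) := by
        have := Fin.not_lt.mp hvle
        exact Fin.le_def.mp this
      set a := vc i with ha
      have hsum := hsft a
      have hmemfib : i ∈ Finset.univ.filter (fun j => vc j = a) := by simp [ha]
      have hlow : ∀ j : Fin n, (j:ℕ) < (i:ℕ) → d0 (Sum.inl j) = d2 (Sum.inl j) := by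
        intro j hj
        refine hsmin (Sum.inl j) ?_
        simp only [varRank]
        omega
      have hex : ∃ k ∈ Finset.univ.filter (fun j => vc j = a), (i:ℕ) < (k:ℕ) ∧
          d0 (Sum.inl k) < d2 (Sum.inl k) := by
        by_contra hcon
        push_neg at hcon
        have hle : ∀ k ∈ Finset.univ.filter (fun j => vc j = a),
            d2 (Sum.inl k) ≤ d0 (Sum.inl k) := by
          intro k hk
          rcases lt_trichotomy (k:ℕ) (i:ℕ) with h | h | h
          · rw [← hlow k h]
          · have hki : k = i := Fin.ext h
            subst hki
            omega
          · have := hcon k hk h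
            omega
        have hstrict := Finset.sum_lt_sum hle
          ⟨i, hmemfib, (by omega : d2 (Sum.inl i) < d0 (Sum.inl i))⟩
        omega
      obtain ⟨k, hkfib, hki, hkgt⟩ := hex
      have hvck : vc k = a := by
        have := Finset.mem_filter.mp hkfib
        exact this.2
      have hlamk := hlam k
      have hyk : d0 (Sum.inr k) ≠ 0 := by omega
      have hkS := havoid _ hyk
      rw [inr_mem_Svars] at hkS
      have hkT : k ∉ T := fun h => hkS (Or.inl h)
      have hkv : ¬ vc k < k := fun h => hkS (Or.inr ⟨hkT, h⟩)
      have hkvn : (k : ℕ) ≤ (vc k : ℕ) := Fin.le_def.mp (Fin.not_lt.mp hkv)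
      have hvckn : (vc k : ℕ) = (a : ℕ) := congrArg Fin.val hvck
      omega

/-! Graph-theoretic consequences of the cutset condition. -/

def homOfSubset (G : SimpleGraph (Fin n)) {s s' : Set (Fin n)} (h : s ⊆ s') :
    G.induce s →g G.induce s' := ⟨fun v => ⟨v.1, h v.2⟩, fun {a b} hab => hab⟩

lemma sameComp_mono {G : SimpleGraph (Fin n)} {T T' : Finset (Fin n)} (hTT : T ⊆ T')
    {i j : Fin n} (h : sameComp G T' i j) : sameComp G T i j := by
  obtain ⟨hi, hj, hr⟩ := h
  have hsub : ((↑T' : Set (Fin n))ᶜ) ⊆ ((↑T : Set (Fin n))ᶜ) := fun x hx hxT =>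
    hx (Finset.coe_subset.mpr hTT hxT)
  exact ⟨hsub hi, hsub hj, SimpleGraph.Reachable.map (homOfSubset G hsub) hr⟩

lemma notMemT_of_ne {T : Finset (Fin n)} {t : Fin n}
    (x : ↥((↑(T.erase t) : Set (Fin n))ᶜ)) (hx : (x : Fin n) ≠ t) : (x : Fin n) ∉ T := by
  intro hmem
  exact x.2 (Finset.mem_coe.mpr (Finset.mem_erase.mpr ⟨hx, hmem⟩))

lemma walk_through_t {G : SimpleGraph (Fin n)} {T : Finset (Fin n)} {t : Fin n}
    (hA : ∀ i j, i ∉ T → j ∉ T → G.Adj t i → G.Adj t j → sameComp G T i j) :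
    ∀ (L : ℕ) (x y : ↥((↑(T.erase t) : Set (Fin n))ᶜ))
      (w : (G.induce ((↑(T.erase t) : Set (Fin n))ᶜ)).Walk x y),
      w.length ≤ L → (x : Fin n) ≠ t → (y : Fin n) ≠ t → sameComp G T (x : Fin n) (y : Fin n) := by
  intro L
  induction L with
  | zero =>
    intro x y w hl hx hy
    cases w with
    | nil => exact sameComp_refl _ _ (notMemT_of_ne x hx)
    | cons h w' => simp [SimpleGraph.Walk.length_cons] at hl
  | succ L ih =>
    intro x y w hl hx hy
    cases w with
    | nil => exact sameComp_refl _ _ (notMemT_of_ne x hx)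
    | @cons _ v _ hxv w' =>
      by_cases hv : (v : Fin n) = t
      · cases w' with
        | nil => exact absurd hv hy
        | @cons _ z _ hvz w'' =>
          have hz : (z : Fin n) ≠ t := by
            intro hzt
            apply (G.induce ((↑(T.erase t) : Set (Fin n))ᶜ)).irrefl (v := v)
            have hzv : z = v := Subtype.ext (hzt.trans hv.symm)
            rwa [hzv] at hvz
          have h1 : G.Adj t (x : Fin n) := by
            have hh : G.Adj (x : Fin n) (v : Fin n) := hxv
            rw [hv] at hh
            exact hh.symm
          have h2 : G.Adj t (z : Fin n) := by
            have hh : G.Adj (v : Fin n) (z : Fin n) := hvz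
            rwa [hv] at hh
          have hcomp1 : sameComp G T (x : Fin n) (z : Fin n) :=
            hA _ _ (notMemT_of_ne x hx) (notMemT_of_ne z hz) h1 h2
          have hlen : w''.length ≤ L := by
            simp only [SimpleGraph.Walk.length_cons] at hl
            omega
          exact sameComp_trans hcomp1 (ih z y w'' hlen hz hy)
      · have hcomp1 : sameComp G T (x : Fin n) (v : Fin n) :=
          adj_sameComp hxv (notMemT_of_ne x hx) (notMemT_of_ne v hv)
        have hlen : w'.length ≤ L := by
          simp only [SimpleGraph.Walk.length_cons] at hl
          omega
        exact sameComp_trans hcomp1 (ih v y w' hlen hv hy)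

lemma cutset_neighbors {G : SimpleGraph (Fin n)} {T : Finset (Fin n)} (hT : IsCutset G T)
    {t : Fin n} (ht : t ∈ T) :
    ∃ i j, i ∉ T ∧ j ∉ T ∧ G.Adj t i ∧ G.Adj t j ∧ ¬ sameComp G T i j := by
  by_contra hcon
  push_neg at hcon
  have hle : compCount G T ≤ compCount G (T.erase t) := by
    have hsub : ((↑T : Set (Fin n))ᶜ) ⊆ ((↑(T.erase t) : Set (Fin n))ᶜ) := fun x hx hxe =>
      hx (Finset.coe_subset.mpr (Finset.erase_subset t T) hxe)
    have hinj : Function.Injective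
        (SimpleGraph.ConnectedComponent.map (homOfSubset G hsub)) := by
      intro c1 c2 hcc
      obtain ⟨u, rfl⟩ := c1.exists_rep
      obtain ⟨w, rfl⟩ := c2.exists_rep
      have hreach := (SimpleGraph.ConnectedComponent.eq
        (v := (homOfSubset G hsub) u) (w := (homOfSubset G hsub) w)).mp hcc
      obtain ⟨wk⟩ := hreach
      have hut : ((homOfSubset G hsub) u : Fin n) ≠ t := by
        intro hh
        exact u.2 (Finset.mem_coe.mpr (hh ▸ ht))
      have hwt : ((homOfSubset G hsub) w : Fin n) ≠ t := by
        intro hh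
        exact w.2 (Finset.mem_coe.mpr (hh ▸ ht))
      have hsc := walk_through_t (fun i j hi hj h1 h2 => hcon i j hi hj h1 h2)
        wk.length _ _ wk le_rfl hut hwt
      obtain ⟨hi, hj, hr⟩ := hsc
      exact Quot.sound hr
    unfold compCount numComp
    exact Nat.card_le_card_of_injective _ hinj
  have hlt := hT t ht
  omega

/-! Assembly lemmas. -/

lemma exists_var_diff {G : SimpleGraph (Fin n)} {T T' : Finset (Fin n)}
    {vc vc' : Fin n → Fin n} (hT' : IsCutset G T')
    (hc : IsCompChoice G T vc) (hc' : IsCompChoice G T' vc') (hne : T ≠ T') :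
    ∃ s, s ∈ Svars T vc ∧ s ∉ Svars T' vc' := by
  by_cases hsub : T ⊆ T'
  · have hex : ∃ t', t' ∈ T' ∧ t' ∉ T := by
      by_contra h
      push_neg at h
      exact hne (Finset.Subset.antisymm hsub h)
    obtain ⟨t', ht'1, ht'2⟩ := hex
    obtain ⟨i, j, hiT', hjT', hadj1, hadj2, hnsc⟩ := cutset_neighbors hT' ht'1
    have hab : vc' i ≠ vc' j := by
      intro h
      exact hnsc (sameComp_trans (hc'.1 i hiT')
        (by rw [h]; exact sameComp_symm (hc'.1 j hjT')))
    have hiT : i ∉ T := fun h => hiT' (hsub h)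
    have hjT : j ∉ T := fun h => hjT' (hsub h)
    have h1 : sameComp G T t' i := adj_sameComp hadj1 ht'2 hiT
    have h2 : sameComp G T t' j := adj_sameComp hadj2 ht'2 hjT
    have hvij : vc i = vc j :=
      choice_eq_of_sameComp hc (sameComp_trans (sameComp_symm h1) h2)
    have hva : vc (vc' i) = vc i :=
      (choice_eq_of_sameComp hc (sameComp_mono hsub (hc'.1 i hiT'))).symm
    have hvb : vc (vc' j) = vc i := by
      rw [hvij]
      exact (choice_eq_of_sameComp hc (sameComp_mono hsub (hc'.1 j hjT'))).symm
    have haT' : vc' i ∉ T' := choice_notMem hc' hiT'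
    have hbT' : vc' j ∉ T' := choice_notMem hc' hjT'
    have haT : vc' i ∉ T := fun h => haT' (hsub h)
    have hbT : vc' j ∉ T := fun h => hbT' (hsub h)
    have hva' : vc' (vc' i) = vc' i := choice_idem hc' hiT'
    have hvb' : vc' (vc' j) = vc' j := choice_idem hc' hjT'
    by_cases hac : vc' i = vc i
    · have hbc : vc' j ≠ vc i := fun h => hab (hac.trans h.symm)
      rcases lt_or_gt_of_ne hbc with h | h
      · refine ⟨Sum.inl (vc' j), Or.inr ⟨hbT, by rw [hvb]; exact h⟩, ?_⟩
        rintro (hmem | ⟨-, hmem⟩)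
        · exact hbT' hmem
        · rw [hvb'] at hmem
          exact lt_irrefl _ hmem
      · refine ⟨Sum.inr (vc' j), Or.inr ⟨hbT, by rw [hvb]; exact h⟩, ?_⟩
        rintro (hmem | ⟨-, hmem⟩)
        · exact hbT' hmem
        · rw [hvb'] at hmem
          exact lt_irrefl _ hmem
    · rcases lt_or_gt_of_ne hac with h | h
      · refine ⟨Sum.inl (vc' i), Or.inr ⟨haT, by rw [hva]; exact h⟩, ?_⟩
        rintro (hmem | ⟨-, hmem⟩)
        · exact haT' hmem
        · rw [hva'] at hmem
          exact lt_irrefl _ hmem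
      · refine ⟨Sum.inr (vc' i), Or.inr ⟨haT, by rw [hva]; exact h⟩, ?_⟩
        rintro (hmem | ⟨-, hmem⟩)
        · exact haT' hmem
        · rw [hva'] at hmem
          exact lt_irrefl _ hmem
  · obtain ⟨t, htT, htT'⟩ := Finset.not_subset.mp hsub
    by_cases hlt : t < vc' t
    · refine ⟨Sum.inr t, Or.inl htT, ?_⟩
      rintro (hmem | ⟨-, hmem⟩)
      · exact htT' hmem
      · exact absurd hlt (not_lt.mpr hmem.le)
    · refine ⟨Sum.inl t, Or.inl htT, ?_⟩
      rintro (hmem | ⟨-, hmem⟩)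
      · exact htT' hmem
      · exact hlt hmem

lemma part2_pair {G : SimpleGraph (Fin n)} {T : Finset (Fin n)} {u v : Fin n → Fin n}
    (hcu : IsCompChoice G T u) (hcv : IsCompChoice G T v)
    {i : Fin n} (hiT : i ∉ T) (hlt : u i < v i) :
    (∃ s, s ∈ Svars T u ∧ s ∉ Svars T v) ∧ (∃ s, s ∈ Svars T v ∧ s ∉ Svars T u) := by
  have hbT : v i ∉ T := choice_notMem hcv hiT
  have haT : u i ∉ T := choice_notMem hcu hiT
  have hub : u (v i) = u i := (choice_eq_of_sameComp hcu (hcv.1 i hiT)).symm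
  have hvb : v (v i) = v i := choice_idem hcv hiT
  have hva : v (u i) = v i := (choice_eq_of_sameComp hcv (hcu.1 i hiT)).symm
  have hua : u (u i) = u i := choice_idem hcu hiT
  constructor
  · refine ⟨Sum.inr (v i), Or.inr ⟨hbT, by rw [hub]; exact hlt⟩, ?_⟩
    rintro (hmem | ⟨-, hmem⟩)
    · exact hbT hmem
    · rw [hvb] at hmem
      exact lt_irrefl _ hmem
  · refine ⟨Sum.inl (u i), Or.inr ⟨haT, by rw [hva]; exact hlt⟩, ?_⟩
    rintro (hmem | ⟨-, hmem⟩)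
    · exact haT hmem
    · rw [hua] at hmem
      exact lt_irrefl _ hmem


def chi0 (vc : Fin n → Fin n) : Fin n → Fin n ⊕ Fin n :=
  fun x => if vc x ≤ x then Sum.inl x else Sum.inr x

def chi (vc : Fin n → Fin n) (t : Fin n) (zeta : Fin n ⊕ Fin n) : Fin n → Fin n ⊕ Fin n :=
  fun x => if x = t then zeta else chi0 vc x

lemma chi0_valid (vc : Fin n → Fin n) (x : Fin n) :
    chi0 vc x = Sum.inl x ∨ chi0 vc x = Sum.inr x := by
  simp only [chi0]
  split_ifs
  · exact Or.inl rfl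
  · exact Or.inr rfl

lemma chi0_not_mem {T : Finset (Fin n)} {vc : Fin n → Fin n} {x : Fin n} (hx : x ∉ T) :
    chi0 vc x ∉ Svars T vc := by
  simp only [chi0]
  split_ifs with h
  · rintro (h1 | ⟨-, h2⟩)
    · exact hx h1
    · exact absurd h2 (not_lt.mpr h)
  · rintro (h1 | ⟨-, h2⟩)
    · exact hx h1
    · exact h h2.le

lemma chi_self (vc : Fin n → Fin n) (t : Fin n) (zeta : Fin n ⊕ Fin n) :
    chi vc t zeta t = zeta := by
  simp [chi]

lemma chi_of_ne (vc : Fin n → Fin n) {t x : Fin n} (zeta : Fin n ⊕ Fin n) (hx : x ≠ t) :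
    chi vc t zeta x = chi0 vc x := by
  simp only [chi, if_neg hx]

lemma chi_valid (vc : Fin n → Fin n) (t : Fin n) (zeta : Fin n ⊕ Fin n)
    (hz : zeta = Sum.inl t ∨ zeta = Sum.inr t) (x : Fin n) :
    chi vc t zeta x = Sum.inl x ∨ chi vc t zeta x = Sum.inr x := by
  by_cases hx : x = t
  · subst hx
    rw [chi_self]
    exact hz
  · rw [chi_of_ne vc zeta hx]
    exact chi0_valid vc x

lemma PTv_le_of (G : SimpleGraph (Fin n)) (T : Finset (Fin n)) (vc : Fin n → Fin n)
    (hT : IsCutset G T) (hc : IsCompChoice G T vc)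
    {Q : Ideal (MvPolynomial (Fin n ⊕ Fin n) K)} (hQp : Q.IsPrime)
    (hQl : initialIdeal (beIdeal K G) ≤ Q) (hQP : Q ≤ PTv K G T vc) :
    PTv K G T vc ≤ Q := by
  classical
  have main : ∀ (t : Fin n), t ∈ T → ∀ (zeta : Fin n ⊕ Fin n),
      (zeta = Sum.inl t ∨ zeta = Sum.inr t) → ∀ (i j : Fin n), i ∉ T → j ∉ T →
      G.Adj t i → G.Adj t j → vc i < vc j →
      (X zeta : MvPolynomial (Fin n ⊕ Fin n) K) ∈ Q := by
    intro t ht zeta hz i j hiT hjT hadj1 hadj2 hab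
    obtain ⟨w1, hw1⟩ := sameComp_exists_walk (sameComp_symm (hc.1 i hiT))
    obtain ⟨w2, hw2⟩ := sameComp_exists_walk (hc.1 j hjT)
    set w : G.Walk (vc i) (vc j) :=
      w1.append (SimpleGraph.Walk.cons hadj1.symm (SimpleGraph.Walk.cons hadj2 w2)) with hw
    have hsupp : ∀ x ∈ w.support, x = t ∨ x ∉ T := by
      intro x hx
      rw [hw, SimpleGraph.Walk.mem_support_append_iff] at hx
      rcases hx with hx | hx
      · exact Or.inr (hw1 x hx)
      · rw [SimpleGraph.Walk.support_cons] at hx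
        rcases List.mem_cons.mp hx with rfl | hx
        · exact Or.inr hiT
        · rw [SimpleGraph.Walk.support_cons] at hx
          rcases List.mem_cons.mp hx with rfl | hx
          · exact Or.inl rfl
          · exact Or.inr (hw2 x hx)
    obtain ⟨s, hsQ, hsS, hcase⟩ := extract_var G T vc hQp hQl hQP hab
      (chi vc t zeta) (chi_valid vc t zeta hz) w
    have haT : vc i ∉ T := choice_notMem hc hiT
    have hbT : vc j ∉ T := choice_notMem hc hjT
    have hva : vc (vc i) = vc i := choice_idem hc hiT
    have hvb : vc (vc j) = vc j := choice_idem hc hjT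
    rcases hcase with rfl | hcase
    · exfalso
      rcases hsS with hmem | ⟨-, hmem⟩
      · exact haT hmem
      · rw [hva] at hmem
        exact lt_irrefl _ hmem
    rcases hcase with rfl | hcase
    · exfalso
      rcases hsS with hmem | ⟨-, hmem⟩
      · exact hbT hmem
      · rw [hvb] at hmem
        exact lt_irrefl _ hmem
    obtain ⟨x, hxsupp, rfl⟩ := hcase
    rcases hsupp x hxsupp with rfl | hxT
    · simpa [chi] using hsQ
    · exfalso
      by_cases hxt : x = t
      · subst hxt
        exact hxT ht
      · rw [chi_of_ne vc zeta hxt] at hsS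
        exact chi0_not_mem hxT hsS
  rw [PTv_eq, Ideal.span_le]
  rintro f ⟨s, hs, rfl⟩
  rw [SetLike.mem_coe]
  rcases s with i | i
  · have hs' : i ∈ T ∨ (i ∉ T ∧ i < vc i) := hs
    rcases hs' with ht | ⟨hiT, hlt⟩
    · obtain ⟨i', j', hi'T, hj'T, hadj1, hadj2, hnsc⟩ := cutset_neighbors hT ht
      have hab : vc i' ≠ vc j' := by
        intro h
        exact hnsc (sameComp_trans (hc.1 i' hi'T)
          (by rw [h]; exact sameComp_symm (hc.1 j' hj'T)))
      rcases lt_or_gt_of_ne hab with h | h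
      · exact main i ht _ (Or.inl rfl) i' j' hi'T hj'T hadj1 hadj2 h
      · exact main i ht _ (Or.inl rfl) j' i' hj'T hi'T hadj2 hadj1 h
    · obtain ⟨w0, hw0⟩ := sameComp_exists_walk (hc.1 i hiT)
      obtain ⟨s, hsQ, hsS, hcase⟩ := extract_var G T vc hQp hQl hQP hlt
        (chi0 vc) (chi0_valid vc) w0
      have haT : vc i ∉ T := choice_notMem hc hiT
      have hva : vc (vc i) = vc i := choice_idem hc hiT
      rcases hcase with rfl | hcase
      · exact hsQ
      rcases hcase with rfl | hcase
      · exfalso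
        rcases hsS with hmem | ⟨-, hmem⟩
        · exact haT hmem
        · rw [hva] at hmem
          exact lt_irrefl _ hmem
      · exfalso
        obtain ⟨x, hxsupp, rfl⟩ := hcase
        exact chi0_not_mem (hw0 x hxsupp) hsS
  · have hs' : i ∈ T ∨ (i ∉ T ∧ vc i < i) := hs
    rcases hs' with ht | ⟨hiT, hlt⟩
    · obtain ⟨i', j', hi'T, hj'T, hadj1, hadj2, hnsc⟩ := cutset_neighbors hT ht
      have hab : vc i' ≠ vc j' := by
        intro h
        exact hnsc (sameComp_trans (hc.1 i' hi'T)
          (by rw [h]; exact sameComp_symm (hc.1 j' hj'T)))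
      rcases lt_or_gt_of_ne hab with h | h
      · exact main i ht _ (Or.inr rfl) i' j' hi'T hj'T hadj1 hadj2 h
      · exact main i ht _ (Or.inr rfl) j' i' hj'T hi'T hadj2 hadj1 h
    · obtain ⟨w0, hw0⟩ := sameComp_exists_walk (sameComp_symm (hc.1 i hiT))
      obtain ⟨s, hsQ, hsS, hcase⟩ := extract_var G T vc hQp hQl hQP hlt
        (chi0 vc) (chi0_valid vc) w0
      have haT : vc i ∉ T := choice_notMem hc hiT
      have hva : vc (vc i) = vc i := choice_idem hc hiT
      rcases hcase with rfl | hcase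
      · exfalso
        rcases hsS with hmem | ⟨-, hmem⟩
        · exact haT hmem
        · rw [hva] at hmem
          exact lt_irrefl _ hmem
      rcases hcase with rfl | hcase
      · exact hsQ
      · exfalso
        obtain ⟨x, hxsupp, rfl⟩ := hcase
        exact chi0_not_mem (hw0 x hxsupp) hsS

lemma PTv_mem_minimalPrimes (G : SimpleGraph (Fin n)) (T : Finset (Fin n))
    (vc : Fin n → Fin n) (hT : IsCutset G T) (hc : IsCompChoice G T vc) :
    PTv K G T vc ∈ (initialIdeal (beIdeal K G)).minimalPrimes := by
  refine ⟨⟨PTv_isPrime G T vc, initial_le_PTv G T vc hc⟩, ?_⟩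
  intro Q hQ hle
  exact PTv_le_of G T vc hT hc hQ.1 hQ.2 hle

end Stmt6Aux

theorem stmt_6 (K : Type*) [Field K] {n : ℕ} (G : SimpleGraph (Fin n)) :
    (∀ (T T' : Finset (Fin n)) (vc vc' : Fin n → Fin n),
      IsCutset G T → IsCutset G T' → IsCompChoice G T vc → IsCompChoice G T' vc' →
      T ≠ T' → ¬ PTv K G T vc ≤ PTv K G T' vc' ∧ ¬ PTv K G T' vc' ≤ PTv K G T vc) ∧
    (∀ (T : Finset (Fin n)) (u v : Fin n → Fin n),
      IsCutset G T → IsCompChoice G T u → IsCompChoice G T v →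
      (∃ i, i ∉ T ∧ u i ≠ v i) →
      ¬ PTv K G T u ≤ PTv K G T v ∧ ¬ PTv K G T v ≤ PTv K G T u) ∧
    (∀ (T : Finset (Fin n)) (vc : Fin n → Fin n),
      IsCutset G T → IsCompChoice G T vc →
      PTv K G T vc ∈ (initialIdeal (beIdeal K G)).minimalPrimes) := by
  refine ⟨?_, ?_, ?_⟩
  · intro T T' vc vc' hT hT' hc hc' hne
    obtain ⟨s1, h1a, h1b⟩ := Stmt6Aux.exists_var_diff hT' hc hc' hne
    obtain ⟨s2, h2a, h2b⟩ := Stmt6Aux.exists_var_diff hT hc' hc hne.symm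
    exact ⟨Stmt6Aux.not_le_of_var h1a h1b, Stmt6Aux.not_le_of_var h2a h2b⟩
  · rintro T u v hT hcu hcv ⟨i, hiT, hne⟩
    rcases lt_or_gt_of_ne hne with h | h
    · obtain ⟨⟨s1, h1a, h1b⟩, ⟨s2, h2a, h2b⟩⟩ := Stmt6Aux.part2_pair hcu hcv hiT h
      exact ⟨Stmt6Aux.not_le_of_var h1a h1b, Stmt6Aux.not_le_of_var h2a h2b⟩
    · obtain ⟨⟨s1, h1a, h1b⟩, ⟨s2, h2a, h2b⟩⟩ := Stmt6Aux.part2_pair hcv hcu hiT h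
      exact ⟨Stmt6Aux.not_le_of_var h2a h2b, Stmt6Aux.not_le_of_var h1a h1b⟩
  · intro T vc hT hc
    exact Stmt6Aux.PTv_mem_minimalPrimes G T vc hT hc

end
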